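/- Let F be a field, let Q be a finite acyclic quiver (Q has no path of length ≥ 1 with equal start and end) in which every path has length at most m−1 (m ≥ 1), and let (A, b) be a path algebra of Q over F. Then for all a₁,…,a_{2m} ∈ A one has [a₁,a₂][a₃,a₄]⋯[a_{2m−1},a_{2m}] = 0, where [a,b] = ab − ba; that is, u_m is a polynomial identity for A. -/

import Mathlib

structure Quiv where
  V : Type
  A : Type
  [fintV : Fintype V]
  [fintA : Fintype A]
  s : A → V
  t : A → V

attribute [instance] Quiv.fintV Quiv.fintA

inductive Quiv.IsPathFrom (Q : Quiv) : Q.V → List Q.A → Q.V → Prop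
  | nil (v : Q.V) : Q.IsPathFrom v [] v
  | cons {l : List Q.A} {v : Q.V} (a : Q.A) :
      Q.IsPathFrom (Q.t a) l v → Q.IsPathFrom (Q.s a) (a :: l) v

/-- A path in a quiver: a start vertex, a compatible list of arrows, and an end vertex. -/
structure Quiv.QPath (Q : Quiv) where
  src : Q.V
  arrows : List Q.A
  tgt : Q.V
  isPath : Q.IsPathFrom src arrows tgt

theorem Quiv.IsPathFrom.append {Q : Quiv} {u v w : Q.V} {l l' : List Q.A}
    (h1 : Q.IsPathFrom u l v) : Q.IsPathFrom v l' w → Q.IsPathFrom u (l ++ l') w := by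
  induction h1 with
  | nil _ => exact id
  | cons a _ ih => exact fun h2 => .cons a (ih h2)

/-- The lazy path at a vertex. -/
def Quiv.QPath.lazy (Q : Quiv) (v : Q.V) : Q.QPath := ⟨v, [], v, .nil v⟩

/-- Concatenation of composable paths. -/
def Quiv.QPath.comp {Q : Quiv} (p q : Q.QPath) (h : p.tgt = q.src) : Q.QPath :=
  ⟨p.src, p.arrows ++ q.arrows, q.tgt, p.isPath.append (h.symm ▸ q.isPath)⟩

/-- The length-one path given by a single arrow. -/
def Quiv.QPath.ofArrow (Q : Quiv) (a : Q.A) : Q.QPath :=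
  ⟨Q.s a, [a], Q.t a, .cons a (.nil _)⟩

/-- A path algebra of the quiver `Q` over `F`: an `F`-algebra `A` together with a basis
`b` indexed by the paths of `Q`, multiplying by concatenation. -/
structure PathAlgebra (F : Type) [Field F] (Q : Quiv) (A : Type) [Ring A] [Algebra F A] where
  b : Q.QPath → A
  indep : LinearIndependent F b
  spans : Submodule.span F (Set.range b) = ⊤
  mul_comp : ∀ (p q : Q.QPath) (h : p.tgt = q.src), b p * b q = b (p.comp q h)
  mul_zero : ∀ p q : Q.QPath, p.tgt ≠ q.src → b p * b q = 0
  sum_lazy : ∑ v : Q.V, b (Quiv.QPath.lazy Q v) = 1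

/-- `f` is a polynomial identity for the `F`-algebra `A`. -/
def IsPolyId (F : Type) [Field F] (A : Type) [Ring A] [Algebra F A]
    (f : FreeAlgebra F ℕ) : Prop :=
  ∀ φ : FreeAlgebra F ℕ →ₐ[F] A, φ f = 0

/-- `A` is a PI algebra: it has a nonzero polynomial identity. -/
def IsPI (F : Type) [Field F] (A : Type) [Ring A] [Algebra F A] : Prop :=
  ∃ f : FreeAlgebra F ℕ, f ≠ 0 ∧ IsPolyId F A f

/-- A cycle: a nonempty closed path with pairwise distinct source vertices. -/
def Quiv.QPath.IsCycle {Q : Quiv} (c : Q.QPath) : Prop :=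
  c.arrows ≠ [] ∧ c.tgt = c.src ∧ (c.arrows.map Q.s).Nodup

/-- The standard identity `St_N` holds in `A`. -/
def SatisfiesStandardIdentity (A : Type) [Ring A] (N : ℕ) : Prop :=
  ∀ a : Fin N → A,
    ∑ σ : Equiv.Perm (Fin N), (Equiv.Perm.sign σ : ℤ) • (List.ofFn fun i => a (σ i)).prod = 0

theorem Quiv.QPath.ext' {Q : Quiv} : ∀ {p q : Q.QPath},
    p.src = q.src → p.arrows = q.arrows → p.tgt = q.tgt → p = q := by
  rintro ⟨s, ar, t, h1⟩ ⟨_, _, _, h2⟩ rfl rfl rfl; rfl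

theorem Quiv.IsPathFrom.nil_eq {Q : Quiv} {u v : Q.V} (h : Q.IsPathFrom u [] v) : u = v := by
  cases h; rfl

/-- The span of the basis elements of paths of length at least `k`. -/
def PathAlgebra.Jk {F : Type} [Field F] {Q : Quiv} {A : Type} [Ring A] [Algebra F A]
    (P : PathAlgebra F Q A) (k : ℕ) : Submodule F A :=
  Submodule.span F {x | ∃ p : Q.QPath, k ≤ p.arrows.length ∧ P.b p = x}

namespace PathAlgebra

variable {F : Type} [Field F] {Q : Quiv} {A : Type} [Ring A] [Algebra F A]
  (P : PathAlgebra F Q A)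

theorem Jk_mono {j k : ℕ} (hjk : j ≤ k) : P.Jk k ≤ P.Jk j :=
  Submodule.span_mono (fun _ ⟨p, hp, hb⟩ => ⟨p, hjk.trans hp, hb⟩)

theorem mem_Jk_zero (x : A) : x ∈ P.Jk 0 := by
  have hx : x ∈ Submodule.span F (Set.range P.b) := P.spans ▸ Submodule.mem_top
  exact Submodule.span_mono (fun y hy => by obtain ⟨p, rfl⟩ := hy; exact ⟨p, Nat.zero_le _, rfl⟩) hx

theorem b_mul_b_mem (p q : Q.QPath) :
    P.b p * P.b q ∈ P.Jk (p.arrows.length + q.arrows.length) := by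
  by_cases h : p.tgt = q.src
  · rw [P.mul_comp p q h]
    exact Submodule.subset_span ⟨p.comp q h, by simp [Quiv.QPath.comp], rfl⟩
  · rw [P.mul_zero p q h]; exact Submodule.zero_mem _

theorem mul_mem_Jk {k l : ℕ} {x y : A} (hx : x ∈ P.Jk k) (hy : y ∈ P.Jk l) :
    x * y ∈ P.Jk (k + l) := by
  have hle : P.Jk k * P.Jk l ≤ P.Jk (k + l) := by
    rw [Jk, Jk, Submodule.span_mul_span]
    apply Submodule.span_le.2
    rintro z ⟨x, ⟨p, hp, rfl⟩, y, ⟨q, hq, rfl⟩, rfl⟩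
    exact P.Jk_mono (Nat.add_le_add hp hq) (P.b_mul_b_mem p q)
  exact hle (Submodule.mul_mem_mul hx hy)

theorem comm_b_b_mem (p q : Q.QPath) : P.b p * P.b q - P.b q * P.b p ∈ P.Jk 1 := by
  by_cases hp : p.arrows = []
  · by_cases hq : q.arrows = []
    · -- both lazy
      have hps : p.src = p.tgt := by
        have := p.isPath; rw [hp] at this; exact this.nil_eq
      have hqs : q.src = q.tgt := by
        have := q.isPath; rw [hq] at this; exact this.nil_eq
      by_cases h : p.tgt = q.src
      · have h' : q.tgt = p.src := by rw [← hqs, ← h, ← hps]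
        rw [P.mul_comp p q h, P.mul_comp q p h']
        have : p.comp q h = q.comp p h' := by
          apply Quiv.QPath.ext'
          · simp [Quiv.QPath.comp, hps, h]
          · simp [Quiv.QPath.comp, hp, hq]
          · simp [Quiv.QPath.comp, ← hqs, ← h, hps]
        rw [this, sub_self]
        exact Submodule.zero_mem _
      · have h' : q.tgt ≠ p.src := fun e => h (by rw [← hps, ← e, ← hqs])
        rw [P.mul_zero p q h, P.mul_zero q p h', sub_self]
        exact Submodule.zero_mem _
    · -- q not lazy
      have h1 : 1 ≤ q.arrows.length := Nat.one_le_iff_ne_zero.2 (by simpa using hq)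
      exact sub_mem (P.Jk_mono (by omega) (P.b_mul_b_mem p q))
        (P.Jk_mono (by omega) (P.b_mul_b_mem q p))
  · -- p not lazy
    have h1 : 1 ≤ p.arrows.length := Nat.one_le_iff_ne_zero.2 (by simpa using hp)
    exact sub_mem (P.Jk_mono (by omega) (P.b_mul_b_mem p q))
      (P.Jk_mono (by omega) (P.b_mul_b_mem q p))

theorem comm_mem_Jk_one (x y : A) : x * y - y * x ∈ P.Jk 1 := by
  have hx : x ∈ Submodule.span F (Set.range P.b) := P.spans ▸ Submodule.mem_top
  have hy : y ∈ Submodule.span F (Set.range P.b) := P.spans ▸ Submodule.mem_top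
  have key : ∀ q : Q.QPath, x * P.b q - P.b q * x ∈ P.Jk 1 := by
    intro q
    refine Submodule.span_induction ?_ ?_ ?_ ?_ hx
    · rintro _ ⟨p, rfl⟩; exact P.comm_b_b_mem p q
    · simp
    · intro a b _ _ ha hb
      have : (a + b) * P.b q - P.b q * (a + b) =
          (a * P.b q - P.b q * a) + (b * P.b q - P.b q * b) := by noncomm_ring
      rw [this]; exact add_mem ha hb
    · intro c a _ ha
      have : (c • a) * P.b q - P.b q * (c • a) = c • (a * P.b q - P.b q * a) := by
        rw [smul_sub, smul_mul_assoc, mul_smul_comm]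
      rw [this]; exact Submodule.smul_mem _ c ha
  refine Submodule.span_induction ?_ ?_ ?_ ?_ hy
  · rintro _ ⟨q, rfl⟩; exact key q
  · simp
  · intro a b _ _ ha hb
    have : x * (a + b) - (a + b) * x = (x * a - a * x) + (x * b - b * x) := by noncomm_ring
    rw [this]; exact add_mem ha hb
  · intro c a _ ha
    have : x * (c • a) - (c • a) * x = c • (x * a - a * x) := by
      rw [smul_sub, smul_mul_assoc, mul_smul_comm]
    rw [this]; exact Submodule.smul_mem _ c ha

theorem list_prod_mem_Jk (l : List A) (h : ∀ x ∈ l, x ∈ P.Jk 1) :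
    l.prod ∈ P.Jk l.length := by
  induction l with
  | nil => simpa using P.mem_Jk_zero 1
  | cons x t ih =>
    rw [List.prod_cons, List.length_cons]
    have := P.mul_mem_Jk (h x List.mem_cons_self)
      (ih fun y hy => h y (List.mem_cons_of_mem _ hy))
    simpa [Nat.add_comm] using this

end PathAlgebra

/-- If `Q` is a finite acyclic quiver all of whose paths have length
at most `m − 1`, then `u_m` is a polynomial identity for a path algebra of `Q`:
any product of `m` commutators vanishes. -/
theorem pathAlgebra_acyclic_product_of_commutators (F : Type) [Field F] (Q : Quiv)
    (A : Type) [Ring A] [Algebra F A] (P : PathAlgebra F Q A)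
    (m : ℕ) (hm : 1 ≤ m)
    (hacyclic : ∀ p : Q.QPath, p.arrows ≠ [] → p.src ≠ p.tgt)
    (hbound : ∀ p : Q.QPath, p.arrows.length ≤ m - 1)
    (a : ℕ → A) :
    (List.ofFn fun i : Fin m =>
      a (2 * i.1) * a (2 * i.1 + 1) - a (2 * i.1 + 1) * a (2 * i.1)).prod = 0 := by
  have hbot : P.Jk m = ⊥ := by
    rw [PathAlgebra.Jk]
    apply Submodule.span_eq_bot.2
    rintro x ⟨p, hp, rfl⟩
    exact absurd (hp.trans (hbound p)) (by omega)
  have hmem := P.list_prod_mem_Jk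
    (List.ofFn fun i : Fin m =>
      a (2 * i.1) * a (2 * i.1 + 1) - a (2 * i.1 + 1) * a (2 * i.1))
    (fun x hx => by
      rw [List.mem_ofFn] at hx
      obtain ⟨i, rfl⟩ := hx
      exact P.comm_mem_Jk_one _ _)
  rw [List.length_ofFn, hbot, Submodule.mem_bot] at hmem
  exact hmem
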